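/- Let V be a Novikov algebra over a field of characteristic zero. Define on the space V[t,t⁻¹] of Laurent polynomials with coefficients in V the bracket [a tⁿ, b tᵐ] = (n(b∘a) − m(a∘b)) t^{n+m−1}. Then this bracket makes V[t,t⁻¹] a Lie algebra (it is antisymmetric and satisfies the Jacobi identity). -/

import Mathlib

set_option linter.unusedSectionVars false

variable (k V : Type*) [Field k] [CharZero k] [AddCommGroup V] [Module k V]

/-- The bracket `[a tⁿ, b tᵐ] = (n (b∘a) − m (a∘b)) t^{n+m−1}` on the space
`V[t,t⁻¹]` of Laurent polynomials over `V`, encoded as finitely supported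
functions `ℤ →₀ V`. -/
noncomputable def laurentBracket (mul : V →ₗ[k] V →ₗ[k] V) (f g : ℤ →₀ V) : ℤ →₀ V :=
  f.sum fun n a => g.sum fun m b =>
    Finsupp.single (n + m - 1) (n • mul b a - m • mul a b)

variable {k V}

lemma lb_ss (mul : V →ₗ[k] V →ₗ[k] V) (n m : ℤ) (a b : V) :
    laurentBracket k V mul (Finsupp.single n a) (Finsupp.single m b)
      = Finsupp.single (n + m - 1) (n • mul b a - m • mul a b) := by
  simp [laurentBracket, Finsupp.sum_single_index]

lemma lb_zero_left (mul : V →ₗ[k] V →ₗ[k] V) (g : ℤ →₀ V) :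
    laurentBracket k V mul 0 g = 0 := by
  simp [laurentBracket]

lemma lb_zero_right (mul : V →ₗ[k] V →ₗ[k] V) (f : ℤ →₀ V) :
    laurentBracket k V mul f 0 = 0 := by
  simp [laurentBracket]

lemma lb_add_left (mul : V →ₗ[k] V →ₗ[k] V) (f f' g : ℤ →₀ V) :
    laurentBracket k V mul (f + f') g
      = laurentBracket k V mul f g + laurentBracket k V mul f' g := by
  unfold laurentBracket
  refine Finsupp.sum_add_index' (fun n => ?_) (fun n a a' => ?_)
  · simp
  · rw [← Finsupp.sum_add]
    refine Finsupp.sum_congr fun m _ => ?_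
    simp only [map_add, LinearMap.add_apply, smul_add, add_sub_add_comm, Finsupp.single_add]

lemma lb_add_right (mul : V →ₗ[k] V →ₗ[k] V) (f g g' : ℤ →₀ V) :
    laurentBracket k V mul f (g + g')
      = laurentBracket k V mul f g + laurentBracket k V mul f g' := by
  unfold laurentBracket
  rw [← Finsupp.sum_add]
  refine Finsupp.sum_congr fun n _ => ?_
  refine Finsupp.sum_add_index' (fun m => ?_) (fun m b b' => ?_)
  · simp
  · simp only [map_add, LinearMap.add_apply, smul_add, add_sub_add_comm, Finsupp.single_add]

lemma lb_antisym_s (mul : V →ₗ[k] V →ₗ[k] V) (n : ℤ) (a : V) (g : ℤ →₀ V) :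
    laurentBracket k V mul (Finsupp.single n a) g
      = - laurentBracket k V mul g (Finsupp.single n a) := by
  induction g using Finsupp.induction with
  | zero => simp [lb_zero_left, lb_zero_right]
  | single_add m b g _ _ ih =>
    rw [lb_add_right, lb_add_left, neg_add, ih, lb_ss, lb_ss,
      show m + n - 1 = n + m - 1 by omega, ← Finsupp.single_neg, neg_sub]

lemma lb_antisym (mul : V →ₗ[k] V →ₗ[k] V) (f g : ℤ →₀ V) :
    laurentBracket k V mul f g = - laurentBracket k V mul g f := by
  induction f using Finsupp.induction with
  | zero => simp [lb_zero_left, lb_zero_right]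
  | single_add n a f _ _ ih =>
    rw [lb_add_left, lb_add_right, neg_add, ih, lb_antisym_s]

lemma jac_sss (mul : V →ₗ[k] V →ₗ[k] V)
    (rsym : ∀ x y z : V,
      mul (mul x y) z - mul x (mul y z) = mul (mul x z) y - mul x (mul z y))
    (lcom : ∀ x y z : V, mul x (mul y z) = mul y (mul x z))
    (n m p : ℤ) (a b c : V) :
    laurentBracket k V mul (laurentBracket k V mul (Finsupp.single n a) (Finsupp.single m b)) (Finsupp.single p c)
      + laurentBracket k V mul (laurentBracket k V mul (Finsupp.single m b) (Finsupp.single p c)) (Finsupp.single n a)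
      + laurentBracket k V mul (laurentBracket k V mul (Finsupp.single p c) (Finsupp.single n a)) (Finsupp.single m b) = 0 := by
  rw [lb_ss, lb_ss, lb_ss, lb_ss, lb_ss, lb_ss,
    show m + p - 1 + n - 1 = n + m - 1 + p - 1 by omega,
    show p + n - 1 + m - 1 = n + m - 1 + p - 1 by omega,
    ← Finsupp.single_add, ← Finsupp.single_add, Finsupp.single_eq_zero]
  have h1 := rsym b c a
  have h2 := rsym a b c
  have h3 := rsym c a b
  have l1 := lcom c b a
  have l2 := lcom c a b
  have l3 := lcom a b c
  simp only [map_sub, map_zsmul, LinearMap.sub_apply, LinearMap.smul_apply]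
  linear_combination (norm := module) (p*n) • h1 + (p*m) • h2 + (n*m) • h3
    + (n^2 - n) • l1 + (m - m^2) • l2 + (p - p^2) • l3

lemma jac_ss (mul : V →ₗ[k] V →ₗ[k] V)
    (rsym : ∀ x y z : V,
      mul (mul x y) z - mul x (mul y z) = mul (mul x z) y - mul x (mul z y))
    (lcom : ∀ x y z : V, mul x (mul y z) = mul y (mul x z))
    (n m : ℤ) (a b : V) (h : ℤ →₀ V) :
    laurentBracket k V mul (laurentBracket k V mul (Finsupp.single n a) (Finsupp.single m b)) h
      + laurentBracket k V mul (laurentBracket k V mul (Finsupp.single m b) h) (Finsupp.single n a)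
      + laurentBracket k V mul (laurentBracket k V mul h (Finsupp.single n a)) (Finsupp.single m b) = 0 := by
  induction h using Finsupp.induction with
  | zero => simp [lb_zero_left, lb_zero_right]
  | single_add p c h _ _ ih =>
    have h1 := jac_sss mul rsym lcom n m p a b c
    simp only [lb_add_left, lb_add_right] at *
    linear_combination (norm := abel) h1 + ih

lemma jac_s (mul : V →ₗ[k] V →ₗ[k] V)
    (rsym : ∀ x y z : V,
      mul (mul x y) z - mul x (mul y z) = mul (mul x z) y - mul x (mul z y))
    (lcom : ∀ x y z : V, mul x (mul y z) = mul y (mul x z))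
    (n : ℤ) (a : V) (g h : ℤ →₀ V) :
    laurentBracket k V mul (laurentBracket k V mul (Finsupp.single n a) g) h
      + laurentBracket k V mul (laurentBracket k V mul g h) (Finsupp.single n a)
      + laurentBracket k V mul (laurentBracket k V mul h (Finsupp.single n a)) g = 0 := by
  induction g using Finsupp.induction with
  | zero => simp [lb_zero_left, lb_zero_right]
  | single_add m b g _ _ ih =>
    have h1 := jac_ss mul rsym lcom n m a b h
    simp only [lb_add_left, lb_add_right] at *
    linear_combination (norm := abel) h1 + ih

variable (k V)

/-- If `V` is a Novikov algebra, the bracket `[a tⁿ, b tᵐ] = (n(b∘a) − m(a∘b)) t^{n+m−1}`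
makes `V[t,t⁻¹]` a Lie algebra: it is antisymmetric and satisfies the Jacobi identity. -/
theorem stmt_1 (mul : V →ₗ[k] V →ₗ[k] V)
    (rsym : ∀ x y z : V,
      mul (mul x y) z - mul x (mul y z) = mul (mul x z) y - mul x (mul z y))
    (lcom : ∀ x y z : V, mul x (mul y z) = mul y (mul x z)) :
    (∀ f g : ℤ →₀ V, laurentBracket k V mul f g = - laurentBracket k V mul g f) ∧
    (∀ f g h : ℤ →₀ V,
      laurentBracket k V mul (laurentBracket k V mul f g) h
        + laurentBracket k V mul (laurentBracket k V mul g h) f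
        + laurentBracket k V mul (laurentBracket k V mul h f) g = 0) := by
  refine ⟨lb_antisym mul, fun f g h => ?_⟩
  induction f using Finsupp.induction with
  | zero => simp [lb_zero_left, lb_zero_right]
  | single_add n a f _ _ ih =>
    have h1 := jac_s mul rsym lcom n a g h
    simp only [lb_add_left, lb_add_right] at *
    linear_combination (norm := abel) h1 + ih
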